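/- For every type σ and every value a in Bσ, the quote function is denotationally correct: the value of the closed term ↓σ a under the canonical extension of the interpretation equals a, i.e. B̂(↓σ a) = a. -/

import Mathlib

namespace PTT


/-- Simple types over a single base type `B`. -/
inductive Ty : Type
  | base : Ty
  | arrow : Ty → Ty → Ty
deriving DecidableEq

/-- Names: the constants `⊥` and `→`, and variables (an index together with a type). -/
inductive Name : Type
  | bot : Name
  | imp : Name
  | var : ℕ → Ty → Name
deriving DecidableEq

/-- The type of a name. -/
def Name.ty : Name → Ty
  | .bot => .base
  | .imp => .arrow .base (.arrow .base .base)
  | .var _ σ => σ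

/-- Terms: names, abstraction over a variable, application. -/
inductive Tm : Type
  | name : Name → Tm
  | lam : ℕ → Ty → Tm → Tm
  | app : Tm → Tm → Tm
deriving DecidableEq

/-- The term `⊥`. -/
def botTm : Tm := .name .bot

/-- The variable `(n, σ)` as a term. -/
def vr (n : ℕ) (σ : Ty) : Tm := .name (.var n σ)

/-- Implication `s → t`. -/
def impTm (s t : Tm) : Tm := .app (.app (.name .imp) s) t

/-- `⊤ := ⊥ → ⊥`. -/
def topTm : Tm := impTm botTm botTm

/-- `¬ s := s → ⊥`. -/
def negTm (s : Tm) : Tm := impTm s botTm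

/-- `s ∨ t := (s → t) → t`. -/
def orTm (s t : Tm) : Tm := impTm (impTm s t) t

/-- `s ∧ t := ¬(¬s ∨ ¬t)`. -/
def andTm (s t : Tm) : Tm := negTm (orTm (negTm s) (negTm t))

/-- `s ≡ t := (s → t) ∧ (t → s)`. -/
def equivTm (s t : Tm) : Tm := andTm (impTm s t) (impTm t s)

/-- The typing relation. -/
inductive HasTy : Tm → Ty → Prop
  | name (x : Name) : HasTy (.name x) x.ty
  | lam {n σ s τ} : HasTy s τ → HasTy (.lam n σ s) (.arrow σ τ)
  | app {s t σ τ} : HasTy s (.arrow σ τ) → HasTy t σ → HasTy (.app s t) τ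

/-- Free variables of a term. -/
def fv : Tm → Finset (ℕ × Ty)
  | .name (.var n σ) => {(n, σ)}
  | .name _ => ∅
  | .lam n σ s => (fv s).erase (n, σ)
  | .app s t => fv s ∪ fv t

/-- A term is closed if it has no free variables. -/
def Closed (s : Tm) : Prop := fv s = ∅

/-- Capture-free parallel substitution (bound variables are renamed). -/
def substAux (ρ : ℕ × Ty → Tm) : Tm → Tm
  | .name (.var n σ) => ρ (n, σ)
  | .name x => .name x
  | .app s t => .app (substAux ρ s) (substAux ρ t)
  | .lam n σ s =>
      let used : Finset ℕ :=
        ((fv s).erase (n, σ)).biUnion (fun p => (fv (ρ p)).image Prod.fst)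
      let m : ℕ := used.sup id + 1
      .lam m σ (substAux (Function.update ρ (n, σ) (vr m σ)) s)

/-- Capture-free substitution `s[(n,σ) := t]`. -/
def subst (s : Tm) (n : ℕ) (σ : Ty) (t : Tm) : Tm :=
  substAux (Function.update (fun p => vr p.1 p.2) (n, σ) t) s

/-- Contexts: terms with exactly one hole (possibly under binders). -/
inductive Ctx : Type
  | hole : Ctx
  | lam : ℕ → Ty → Ctx → Ctx
  | appL : Ctx → Tm → Ctx
  | appR : Tm → Ctx → Ctx

/-- Filling the hole of a context with a term (capturing is allowed). -/
def Ctx.fill : Ctx → Tm → Tm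
  | .hole, s => s
  | .lam n σ C, s => .lam n σ (C.fill s)
  | .appL C t, s => .app (C.fill s) t
  | .appR t C, s => .app t (C.fill s)

/-- `C` captures the variable `p` if the hole of `C` lies below a binder for `p`. -/
def Ctx.captures : Ctx → ℕ × Ty → Prop
  | .hole, _ => False
  | .lam n σ C, p => p = (n, σ) ∨ C.captures p
  | .appL C _, p => C.captures p
  | .appR _ C, p => C.captures p

/-- `C` is admissible for `A` if it captures no variable free in `A`. -/
def Ctx.Admissible (C : Ctx) (A : Finset Tm) : Prop :=
  ∀ p ∈ A.biUnion fv, ¬ C.captures p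

/-- `s` is a subterm of `t`. -/
def Subterm (s t : Tm) : Prop := ∃ C : Ctx, C.fill s = t

/-- β-redexes. -/
def IsBetaRedex : Tm → Prop
  | .app (.lam _ _ _) _ => True
  | _ => False

/-- A term is β-normal if none of its subterms is a β-redex. -/
def BetaNormal (t : Tm) : Prop := ∀ s, Subterm s t → ¬ IsBetaRedex s

/-- Lambda equivalence: the least equivalence on well-typed terms containing
α-, β-, η-conversion and closed under arbitrary contexts. -/
inductive LamEq : Tm → Tm → Prop
  | refl {s σ} : HasTy s σ → LamEq s s
  | symm {s t} : LamEq s t → LamEq t s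
  | trans {s t u} : LamEq s t → LamEq t u → LamEq s u
  | alpha {n m σ s τ} : HasTy (.lam n σ s) τ → (m, σ) ∉ fv s →
      LamEq (.lam n σ s) (.lam m σ (subst s n σ (vr m σ)))
  | beta {n σ s t τ} : HasTy (.app (.lam n σ s) t) τ →
      LamEq (.app (.lam n σ s) t) (subst s n σ t)
  | eta {n σ s τ} : HasTy (.lam n σ (.app s (vr n σ))) τ → (n, σ) ∉ fv s →
      LamEq (.lam n σ (.app s (vr n σ))) s
  | ctx {s t σ} (C : Ctx) : LamEq s t → HasTy (C.fill s) σ → LamEq (C.fill s) (C.fill t)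

/-- The standard set-theoretic interpretation of types: `B` is interpreted as the
two truth values (`Bool`), functional types as full function spaces. -/
def Ty.sem : Ty → Type
  | .base => Bool
  | .arrow σ τ => σ.sem → τ.sem

def Ty.semDefault : (σ : Ty) → σ.sem
  | .base => false
  | .arrow _ τ => fun _ => τ.semDefault

instance (σ : Ty) : Inhabited σ.sem := ⟨σ.semDefault⟩

noncomputable instance Ty.semFintype : (σ : Ty) → Fintype σ.sem
  | .base => inferInstanceAs (Fintype Bool)
  | .arrow σ τ =>
      letI := Ty.semFintype σ
      letI := Ty.semFintype τ
      letI := Classical.decEq σ.sem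
      inferInstanceAs (Fintype (σ.sem → τ.sem))

def Ty.semCast {σ τ : Ty} (h : σ = τ) (v : σ.sem) : τ.sem := h ▸ v

/-- An interpretation assigns to every variable a value of the corresponding type
(the constants `⊥` and `→` have their values fixed). -/
def Interp : Type := ℕ → (σ : Ty) → σ.sem

def Interp.update (I : Interp) (n : ℕ) (σ : Ty) (v : σ.sem) : Interp :=
  fun m τ => if h : m = n ∧ τ = σ then Ty.semCast h.2.symm v else I m τ

/-- Type inference. -/
def typeOf : Tm → Option Ty
  | .name x => some x.ty
  | .lam _ σ s => (typeOf s).map (Ty.arrow σ)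
  | .app s t =>
      match typeOf s, typeOf t with
      | some (.arrow σ τ), some σ' => if σ = σ' then some τ else none
      | _, _ => none

/-- The canonical extension `Î` of an interpretation to all terms: `eval I s σ`
is the value of `s` at type `σ` (on well-typed terms this is the usual
denotation; junk default values are used at type mismatches). -/
def eval (I : Interp) : Tm → (σ : Ty) → σ.sem
  | .name (.var n τ), σ => if h : τ = σ then Ty.semCast h (I n τ) else default
  | .name .bot, σ =>
      match σ with
      | .base => false
      | _ => default
  | .name .imp, σ =>
      match σ with
      | .arrow .base (.arrow .base .base) => fun a b => !a || b
      | _ => default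
  | .app s t, σ =>
      match typeOf t with
      | some τ => eval I s (.arrow τ σ) (eval I t τ)
      | none => default
  | .lam n τ s, σ =>
      match σ with
      | .base => default
      | .arrow σ₁ σ₂ =>
          if h : σ₁ = τ then
            fun a => eval (I.update n τ (Ty.semCast h a)) s σ₂
          else default

/-- `I` satisfies the formula `s` if `Î s = 1`. -/
def Satisfies (I : Interp) (s : Tm) : Prop := eval I s .base = true

/-- A formula is valid if every interpretation satisfies it. -/
def ValidFml (s : Tm) : Prop := ∀ I : Interp, Satisfies I s

/-- A sequent `A ⇒ s` is valid if every interpretation satisfying `A` satisfies `s`. -/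
def ValidSeq (A : Finset Tm) (s : Tm) : Prop :=
  ∀ I : Interp, (∀ t ∈ A, Satisfies I t) → Satisfies I s

/-- Finite disjunction (the empty disjunction is `⊥`). -/
def orList : List Tm → Tm
  | [] => botTm
  | [s] => s
  | s :: l => orTm s (orList l)

/-- Finite conjunction (the empty conjunction is `⊤`). -/
def andList : List Tm → Tm
  | [] => topTm
  | [s] => s
  | s :: l => andTm s (andList l)

/-- The argument types of a type (every type has the form `σ₁…σₙB`). -/
def Ty.args : Ty → List Ty
  | .base => []
  | .arrow σ τ => σ :: τ.args

/-- Tuples of values along a list of types. -/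
def Tup : List Ty → Type
  | [] => PUnit
  | σ :: l => σ.sem × Tup l

noncomputable instance TupFintype : (l : List Ty) → Fintype (Tup l)
  | [] => inferInstanceAs (Fintype PUnit)
  | σ :: l =>
      letI := TupFintype l
      inferInstanceAs (Fintype (σ.sem × Tup l))

/-- Applying a function value to a tuple of arguments (the result type is `B`). -/
def Ty.applyTup : (σ : Ty) → σ.sem → Tup σ.args → Bool
  | .base, a, _ => a
  | .arrow _ τ, f, p => τ.applyTup (f p.1) p.2

/-- Quote/identity data for each type in a list: a quote function and the term `≐`. -/
def ArgData : List Ty → Type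
  | [] => PUnit
  | σ :: l => ((σ.sem → Tm) × Tm) × ArgData l

/-- The conjunction list `x_k ≐_{σ_k} (↓_{σ_k} b_k), …` for a tuple `b`. -/
def eqConj : (l : List Ty) → ArgData l → ℕ → Tup l → List Tm
  | [], _, _, _ => []
  | σ :: l, (d, ds), k, (b, bs) =>
      (.app (.app d.2 (vr k σ)) (d.1 b)) :: eqConj l ds (k + 1) bs

/-- `λ x_k : σ_k. …` binding one variable for each type in the list. -/
def mkLams : (l : List Ty) → ℕ → Tm → Tm
  | [], _, body => body
  | σ :: l, k, body => .lam k σ (mkLams l (k + 1) body)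

/-- The body of the quote term
`↓_{σ₁…σₙB} a := λx₁…xₙ. ⋁_{b₁…bₙ, a b₁…bₙ = 1} ⋀_j x_j ≐_{σ_j} (↓_{σ_j} b_j)`. -/
noncomputable def quoteBodyAux (σ : Ty) (ad : ArgData σ.args) (a : σ.sem) : Tm :=
  mkLams σ.args 0 (orList
    ((((Finset.univ : Finset (Tup σ.args)).toList.filter
        (fun b => σ.applyTup a b))).map
      (fun b => andList (eqConj σ.args ad 0 b))))

/-- `∀σ := λf. ⋀_{a ∈ Bσ} f (↓σ a)`, given the quote function for `σ`. -/
noncomputable def allTmAux (σ : Ty) (q : σ.sem → Tm) : Tm :=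
  .lam 0 (.arrow σ .base)
    (andList (((Finset.univ : Finset σ.sem).toList).map
      (fun a => .app (vr 0 (.arrow σ .base)) (q a))))

mutual
  /-- The quote function `↓σ` together with the identity term `≐σ`. -/
  noncomputable def quoteEq : (σ : Ty) → ((σ.sem → Tm) × Tm)
    | .base =>
        (fun a => quoteBodyAux .base PUnit.unit a,
         .lam 0 .base (.lam 1 .base (equivTm (vr 0 .base) (vr 1 .base))))
    | .arrow σ τ =>
        (fun a => quoteBodyAux (.arrow σ τ) ((quoteEq σ, argData τ) : ArgData (σ :: τ.args)) a,
         .lam 0 (.arrow σ τ) (.lam 1 (.arrow σ τ)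
           (.app (allTmAux σ (quoteEq σ).1)
             (.lam 2 σ
               (.app (.app (quoteEq τ).2
                  (.app (vr 0 (.arrow σ τ)) (vr 2 σ)))
                (.app (vr 1 (.arrow σ τ)) (vr 2 σ)))))))
  /-- Quote/identity data for all argument types of a type. -/
  noncomputable def argData : (σ : Ty) → ArgData σ.args
    | .base => PUnit.unit
    | .arrow σ τ => ((quoteEq σ, argData τ) : ArgData (σ :: τ.args))
end

/-- The quote function `↓σ : Bσ → Λ`. -/
noncomputable def quote (σ : Ty) (a : σ.sem) : Tm := (quoteEq σ).1 a

/-- The term `≐σ : σσB` denoting the identity predicate on `Bσ`. -/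
noncomputable def eqTm (σ : Ty) : Tm := (quoteEq σ).2

/-- The term `∀σ : (σB)B`. -/
noncomputable def allTm (σ : Ty) : Tm := allTmAux σ (quote σ)


/-- Propositional formulas: `s ::= x | ⊥ | s → s` with `x` a variable of type `B`. -/
inductive Propositional : Tm → Prop
  | var (n : ℕ) : Propositional (vr n .base)
  | bot : Propositional botTm
  | imp {s t} : Propositional s → Propositional t → Propositional (impTm s t)

/-- A type-respecting substitution of terms for variables. -/
def IsSubstitution (ρ : ℕ × Ty → Tm) : Prop := ∀ n σ, HasTy (ρ (n, σ)) σ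

/-- A formula is tautologous if it is a substitution instance of a tautology
(a valid propositional formula). -/
def Tautologous (s : Tm) : Prop :=
  ∃ t ρ, Propositional t ∧ ValidFml t ∧ IsSubstitution ρ ∧ s = substAux ρ t

/-- The proof system: Triv, Weak, Ded, MP, DN, Lam and Boolean replacement (BR).
Sequents consist of a finite set of formulas and a formula. -/
inductive Ded : Finset Tm → Tm → Prop
  | triv {A s} : (∀ t ∈ A, HasTy t .base) → HasTy s .base → Ded (insert s A) s
  | weak {A s t} : HasTy s .base → Ded A t → Ded (insert s A) t
  | ded {A s t} : Ded (insert s A) t → Ded A (impTm s t)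
  | mp {A s t} : Ded A (impTm s t) → Ded A s → Ded A t
  | dn {A s} : Ded A (negTm (negTm s)) → Ded A s
  | lam {A s t} : Ded A s → LamEq s t → HasTy t .base → Ded A t
  | br {A s t} (C : Ctx) : C.Admissible A → Ded A (equivTm s t) →
      Ded A (C.fill s) → HasTy (C.fill t) .base → Ded A (C.fill t)

/-! ### Auxiliary development for quote_denotes -/

lemma semCast_self {σ : Ty} (h : σ = σ) (v : σ.sem) : Ty.semCast h v = v := rfl

lemma update_same (I : Interp) (n : ℕ) (σ : Ty) (v : σ.sem) :
    (I.update n σ v) n σ = v := by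
  unfold Interp.update
  rw [dif_pos ⟨rfl, rfl⟩]
  exact semCast_self _ v

lemma update_ne (I : Interp) {n m : ℕ} {σ τ : Ty} (v : σ.sem) (h : ¬(m = n ∧ τ = σ)) :
    (I.update n σ v) m τ = I m τ := by
  unfold Interp.update
  rw [dif_neg h]

lemma typeOf_of_hasTy : ∀ {s σ}, HasTy s σ → typeOf s = some σ := by
  intro s σ h
  induction h with
  | name x => rfl
  | lam _ ih => simp [typeOf, ih]
  | app _ _ ihs iht => simp [typeOf, ihs, iht]

lemma hasTy_botTm : HasTy botTm .base := HasTy.name .bot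
lemma hasTy_vr (n : ℕ) (σ : Ty) : HasTy (vr n σ) σ := HasTy.name (.var n σ)

lemma hasTy_impTm {s t : Tm} (hs : HasTy s .base) (ht : HasTy t .base) :
    HasTy (impTm s t) .base := .app (.app (HasTy.name .imp) hs) ht

lemma hasTy_negTm {s : Tm} (hs : HasTy s .base) : HasTy (negTm s) .base :=
  hasTy_impTm hs hasTy_botTm

lemma hasTy_topTm : HasTy topTm .base := hasTy_impTm hasTy_botTm hasTy_botTm

lemma hasTy_orTm {s t : Tm} (hs : HasTy s .base) (ht : HasTy t .base) :
    HasTy (orTm s t) .base := hasTy_impTm (hasTy_impTm hs ht) ht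

lemma hasTy_andTm {s t : Tm} (hs : HasTy s .base) (ht : HasTy t .base) :
    HasTy (andTm s t) .base :=
  hasTy_negTm (hasTy_orTm (hasTy_negTm hs) (hasTy_negTm ht))

lemma hasTy_equivTm {s t : Tm} (hs : HasTy s .base) (ht : HasTy t .base) :
    HasTy (equivTm s t) .base :=
  hasTy_andTm (hasTy_impTm hs ht) (hasTy_impTm ht hs)

lemma hasTy_orList : ∀ {l : List Tm}, (∀ s ∈ l, HasTy s .base) → HasTy (orList l) .base
  | [], _ => hasTy_botTm
  | [s], h => h s (by simp)
  | s :: t :: l, h =>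
      hasTy_orTm (h s (by simp)) (hasTy_orList (fun u hu => h u (by simp at hu ⊢; tauto)))

lemma hasTy_andList : ∀ {l : List Tm}, (∀ s ∈ l, HasTy s .base) → HasTy (andList l) .base
  | [], _ => hasTy_topTm
  | [s], h => h s (by simp)
  | s :: t :: l, h =>
      hasTy_andTm (h s (by simp)) (hasTy_andList (fun u hu => h u (by simp at hu ⊢; tauto)))

/-- The canonical arg-data built from `quoteEq`. -/
noncomputable def dataFor : (l : List Ty) → ArgData l
  | [] => PUnit.unit
  | σ :: l => ((quoteEq σ, dataFor l) : ArgData (σ :: l))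

lemma argData_eq : ∀ σ : Ty, argData σ = dataFor σ.args
  | .base => rfl
  | .arrow σ τ => by
      show ((quoteEq σ, argData τ) : ArgData (σ :: τ.args)) = _
      rw [argData_eq τ]
      rfl

lemma quote_def (σ : Ty) (a : σ.sem) :
    quote σ a = quoteBodyAux σ (dataFor σ.args) a := by
  cases σ with
  | base => rfl
  | arrow σ τ =>
      show quoteBodyAux (.arrow σ τ) ((quoteEq σ, argData τ) : ArgData (σ :: τ.args)) a = _
      rw [argData_eq τ]
      rfl

def QT (σ : Ty) : Prop := ∀ a, HasTy (quote σ a) σ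
def ET (σ : Ty) : Prop := HasTy (eqTm σ) (.arrow σ (.arrow σ .base))

lemma hasTy_eqConj : ∀ (l : List Ty), (∀ ρ ∈ l, QT ρ ∧ ET ρ) →
    ∀ (k : ℕ) (b : Tup l), ∀ s ∈ eqConj l (dataFor l) k b, HasTy s .base
  | [], _, _, _ => by intro s hs; simp [eqConj] at hs
  | σ :: l, H, k, b => by
      intro s hs
      change s ∈ (.app (.app (quoteEq σ).2 (vr k σ)) ((quoteEq σ).1 b.1)) ::
        eqConj l (dataFor l) (k + 1) b.2 at hs
      simp only [eqConj, dataFor, List.mem_cons] at hs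
      rcases hs with rfl | hs
      · exact .app (.app (H σ (by simp)).2 (hasTy_vr k σ)) ((H σ (by simp)).1 b.1)
      · exact hasTy_eqConj l (fun ρ hρ => H ρ (by simp [hρ])) (k+1) b.2 s hs

lemma hasTy_mkLams : ∀ (l : List Ty) (k : ℕ) {body : Tm}, HasTy body .base →
    HasTy (mkLams l k body) (List.foldr .arrow .base l)
  | [], _, _, h => h
  | σ :: l, k, body, h => .lam (hasTy_mkLams l (k+1) h)

lemma foldr_args : ∀ σ : Ty, List.foldr Ty.arrow Ty.base σ.args = σ
  | .base => rfl
  | .arrow σ τ => by simp [Ty.args, foldr_args τ]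

lemma QT_of {σ : Ty} (H : ∀ ρ ∈ σ.args, QT ρ ∧ ET ρ) : QT σ := by
  intro a
  rw [quote_def]
  unfold quoteBodyAux
  have hb : HasTy (orList ((((Finset.univ : Finset (Tup σ.args)).toList.filter
        (fun b => σ.applyTup a b))).map
      (fun b => andList (eqConj σ.args (dataFor σ.args) 0 b)))) .base := by
    apply hasTy_orList
    intro s hs
    simp only [List.mem_map] at hs
    obtain ⟨b, _, rfl⟩ := hs
    exact hasTy_andList (fun u hu => hasTy_eqConj σ.args H 0 b u hu)
  have h := hasTy_mkLams σ.args 0 hb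
  rwa [foldr_args] at h

lemma hasTy_allTmAux {σ : Ty} {q : σ.sem → Tm} (hq : ∀ a, HasTy (q a) σ) :
    HasTy (allTmAux σ q) (.arrow (.arrow σ .base) .base) := by
  refine .lam (hasTy_andList ?_)
  intro s hs
  simp only [List.mem_map] at hs
  obtain ⟨b, _, rfl⟩ := hs
  exact .app (hasTy_vr 0 (.arrow σ .base)) (hq b)

lemma ET_base : ET .base :=
  .lam (.lam (hasTy_equivTm (hasTy_vr 0 .base) (hasTy_vr 1 .base)))

lemma ET_arrow {σ τ : Ty} (hσ : QT σ) (hτ : ET τ) : ET (.arrow σ τ) := by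
  refine .lam (.lam (.app (hasTy_allTmAux hσ) (.lam (.app (.app hτ ?_) ?_))))
  · exact .app (hasTy_vr 0 (.arrow σ τ)) (hasTy_vr 2 σ)
  · exact .app (hasTy_vr 1 (.arrow σ τ)) (hasTy_vr 2 σ)

def Ty.depth : Ty → ℕ
  | .base => 0
  | .arrow σ τ => max σ.depth τ.depth + 1

lemma depth_args : ∀ {σ ρ : Ty}, ρ ∈ σ.args → ρ.depth < σ.depth := by
  intro σ
  induction σ with
  | base => intro ρ h; simp [Ty.args] at h
  | arrow σ τ ihσ ihτ =>
      intro ρ h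
      simp only [Ty.args, List.mem_cons] at h
      rcases h with rfl | h
      · simp [Ty.depth]
      · have := ihτ h
        simp [Ty.depth]; omega

lemma hasTyMain : ∀ σ : Ty, QT σ ∧ ET σ := by
  suffices h : ∀ (n : ℕ) (σ : Ty), σ.depth ≤ n → QT σ ∧ ET σ from
    fun σ => h σ.depth σ le_rfl
  intro n
  induction n with
  | zero =>
      intro σ h
      cases σ with
      | base => exact ⟨QT_of (by simp [Ty.args]), ET_base⟩
      | arrow σ τ => simp [Ty.depth] at h
  | succ n ih =>
      intro σ h
      cases σ with
      | base => exact ⟨QT_of (by simp [Ty.args]), ET_base⟩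
      | arrow σ τ =>
          have hargs : ∀ ρ ∈ (Ty.arrow σ τ).args, QT ρ ∧ ET ρ := by
            intro ρ hρ
            exact ih ρ (by have := depth_args hρ; omega)
          refine ⟨QT_of hargs, ET_arrow ?_ ?_⟩
          · exact (ih σ (by simp [Ty.depth] at h; omega)).1
          · exact (ih τ (by simp [Ty.depth] at h; omega)).2

lemma hasTy_quote (σ : Ty) (a : σ.sem) : HasTy (quote σ a) σ := (hasTyMain σ).1 a
lemma hasTy_eqTm (σ : Ty) : HasTy (eqTm σ) (.arrow σ (.arrow σ .base)) := (hasTyMain σ).2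

/-! ### Semantic evaluation lemmas -/

lemma bool_eq_of_iff {x y : Bool} (h : x = true ↔ y = true) : x = y := by
  cases x <;> cases y <;> simp_all

lemma eval_vr (I : Interp) (n : ℕ) (σ : Ty) : eval I (vr n σ) σ = I n σ := by
  show (if h : σ = σ then Ty.semCast h (I n σ) else default) = _
  rw [dif_pos rfl]; rfl

lemma eval_app_some (I : Interp) {s t : Tm} {τ : Ty} (σ : Ty) (h : typeOf t = some τ) :
    eval I (.app s t) σ = eval I s (.arrow τ σ) (eval I t τ) := by
  show (match typeOf t with
    | some τ => eval I s (.arrow τ σ) (eval I t τ)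
    | none => default) = _
  rw [h]

lemma eval_lam (I : Interp) (n : ℕ) (τ σ₂ : Ty) (s : Tm) :
    eval I (.lam n τ s) (.arrow τ σ₂) = fun a => eval (I.update n τ a) s σ₂ := by
  show (if h : τ = τ then fun a => eval (I.update n τ (Ty.semCast h a)) s σ₂ else default) = _
  rw [dif_pos rfl]; rfl

lemma eval_imp (I : Interp) :
    eval I (.name .imp) (.arrow .base (.arrow .base .base)) = fun a b => !a || b := rfl

lemma typeOf_botTm : typeOf botTm = some .base := rfl

lemma typeOf_impTm {s t : Tm} (hs : typeOf s = some .base) (ht : typeOf t = some .base) :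
    typeOf (impTm s t) = some .base := by
  simp [impTm, typeOf, Name.ty, hs, ht]

lemma eval_impTm (I : Interp) {s t : Tm} (hs : typeOf s = some .base)
    (ht : typeOf t = some .base) :
    eval I (impTm s t) .base = (!eval I s .base || eval I t .base) := by
  rw [impTm, eval_app_some _ _ ht, eval_app_some _ _ hs, eval_imp]

lemma eval_negTm (I : Interp) {s : Tm} (hs : typeOf s = some .base) :
    eval I (negTm s) .base = !eval I s .base := by
  rw [negTm, eval_impTm I hs typeOf_botTm]
  show (!eval I s .base || false) = _
  cases eval I s .base <;> rfl

lemma typeOf_negTm {s : Tm} (hs : typeOf s = some .base) :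
    typeOf (negTm s) = some .base := typeOf_impTm hs typeOf_botTm

lemma eval_orTm (I : Interp) {s t : Tm} (hs : typeOf s = some .base)
    (ht : typeOf t = some .base) :
    eval I (orTm s t) .base = (eval I s .base || eval I t .base) := by
  rw [orTm, eval_impTm I (typeOf_impTm hs ht) ht, eval_impTm I hs ht]
  cases eval I s .base <;> cases eval I t .base <;> rfl

lemma typeOf_orTm {s t : Tm} (hs : typeOf s = some .base) (ht : typeOf t = some .base) :
    typeOf (orTm s t) = some .base := typeOf_impTm (typeOf_impTm hs ht) ht

lemma eval_andTm (I : Interp) {s t : Tm} (hs : typeOf s = some .base)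
    (ht : typeOf t = some .base) :
    eval I (andTm s t) .base = (eval I s .base && eval I t .base) := by
  rw [andTm, eval_negTm I (typeOf_orTm (typeOf_negTm hs) (typeOf_negTm ht)),
    eval_orTm I (typeOf_negTm hs) (typeOf_negTm ht), eval_negTm I hs, eval_negTm I ht]
  cases eval I s .base <;> cases eval I t .base <;> rfl

lemma typeOf_andTm {s t : Tm} (hs : typeOf s = some .base) (ht : typeOf t = some .base) :
    typeOf (andTm s t) = some .base :=
  typeOf_negTm (typeOf_orTm (typeOf_negTm hs) (typeOf_negTm ht))

lemma eval_equivTm (I : Interp) {s t : Tm} (hs : typeOf s = some .base)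
    (ht : typeOf t = some .base) :
    eval I (equivTm s t) .base = true ↔ eval I s .base = eval I t .base := by
  rw [equivTm, eval_andTm I (typeOf_impTm hs ht) (typeOf_impTm ht hs),
    eval_impTm I hs ht, eval_impTm I ht hs]
  cases eval I s .base <;> cases eval I t .base <;> simp only [Ty.sem] <;> decide

lemma eval_orList (I : Interp) : ∀ {l : List Tm}, (∀ s ∈ l, HasTy s .base) →
    eval I (orList l) .base = l.any (fun s => eval I s .base)
  | [], _ => rfl
  | [s], _ => by
      show eval I s .base = (eval I s .base || false)
      cases eval I s .base <;> rfl
  | s :: t :: l, h => by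
      have h2 : ∀ u ∈ t :: l, HasTy u .base := fun u hu => h u (by simp at hu ⊢; tauto)
      rw [show orList (s :: t :: l) = orTm s (orList (t :: l)) from rfl,
        eval_orTm I (typeOf_of_hasTy (h s (by simp)))
          (typeOf_of_hasTy (hasTy_orList h2)), eval_orList I h2]
      rfl

lemma eval_andList (I : Interp) : ∀ {l : List Tm}, (∀ s ∈ l, HasTy s .base) →
    eval I (andList l) .base = l.all (fun s => eval I s .base)
  | [], _ => rfl
  | [s], _ => by
      show eval I s .base = (eval I s .base && true)
      cases eval I s .base <;> rfl
  | s :: t :: l, h => by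
      have h2 : ∀ u ∈ t :: l, HasTy u .base := fun u hu => h u (by simp at hu ⊢; tauto)
      rw [show andList (s :: t :: l) = andTm s (andList (t :: l)) from rfl,
        eval_andTm I (typeOf_of_hasTy (h s (by simp)))
          (typeOf_of_hasTy (hasTy_andList h2)), eval_andList I h2]
      rfl

/-- Updating an interpretation along a tuple of values. -/
def updates : Interp → ℕ → (l : List Ty) → Tup l → Interp
  | I, _, [], _ => I
  | I, k, σ :: l, b => updates (I.update k σ b.1) (k + 1) l b.2

lemma updates_lt : ∀ (l : List Ty) (I : Interp) (k : ℕ) (b : Tup l) (m : ℕ) (τ : Ty),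
    m < k → updates I k l b m τ = I m τ
  | [], _, _, _, _, _, _ => rfl
  | σ :: l, I, k, b, m, τ, h => by
      show updates (I.update k σ b.1) (k + 1) l b.2 m τ = _
      rw [updates_lt l _ (k + 1) b.2 m τ (by omega),
        update_ne _ _ (fun hc => by omega)]

lemma eval_mkLams : ∀ (σ : Ty) (k : ℕ) (body : Tm) (I : Interp) (b : Tup σ.args),
    σ.applyTup (eval I (mkLams σ.args k body) σ) b
      = eval (updates I k σ.args b) body .base := by
  intro σ
  induction σ with
  | base => intro k body I b; rfl
  | arrow σ τ _ ihτ =>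
      intro k body I b
      show τ.applyTup ((eval I (.lam k σ (mkLams τ.args (k + 1) body)) (.arrow σ τ)) b.1) b.2
        = eval (updates (I.update k σ b.1) (k + 1) τ.args b.2) body .base
      rw [show (eval I (.lam k σ (mkLams τ.args (k + 1) body)) (.arrow σ τ))
          = fun a => eval (I.update k σ a) (mkLams τ.args (k + 1) body) τ from
        eval_lam _ _ _ _ _]
      exact ihτ (k + 1) body (I.update k σ b.1) b.2

def QOK (σ : Ty) : Prop := ∀ (I : Interp) (a : σ.sem), eval I (quote σ a) σ = a
def EOK (σ : Ty) : Prop := ∀ (I : Interp) (x y : σ.sem),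
  (eval I (eqTm σ) (.arrow σ (.arrow σ .base)) x y = true ↔ x = y)

lemma eval_eqApp {σ : Ty} (I : Interp) {s t : Tm} (hs : typeOf s = some σ)
    (ht : typeOf t = some σ) :
    eval I (.app (.app (eqTm σ) s) t) .base
      = eval I (eqTm σ) (.arrow σ (.arrow σ .base)) (eval I s σ) (eval I t σ) := by
  rw [eval_app_some _ _ ht, eval_app_some _ _ hs]

lemma applyTup_ext : ∀ (σ : Ty) (f g : σ.sem),
    (∀ b, σ.applyTup f b = σ.applyTup g b) → f = g
  | .base, f, g, h => h PUnit.unit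
  | .arrow σ τ, f, g, h =>
      funext fun x => applyTup_ext τ (f x) (g x) (fun b => h (x, b))

lemma eqConj_spec : ∀ (l : List Ty), (∀ ρ ∈ l, QOK ρ ∧ EOK ρ) →
    ∀ (k : ℕ) (b b' : Tup l) (I : Interp),
    (((eqConj l (dataFor l) k b).all
        (fun s => eval (updates I k l b') s .base)) = true) ↔ b' = b
  | [], _, k, b, b', I => by
      constructor
      · intro _; rfl
      · intro _; rfl
  | σ :: l, H, k, b, b', I => by
      have Hσ := H σ (by simp)
      show (((.app (.app (eqTm σ) (vr k σ)) (quote σ b.1)) ::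
          eqConj l (dataFor l) (k + 1) b.2).all
          (fun s => eval (updates (I.update k σ b'.1) (k + 1) l b'.2) s .base) = true) ↔ _
      erw [List.all_cons, Bool.and_eq_true]
      have hhead : eval (updates (I.update k σ b'.1) (k + 1) l b'.2)
          (.app (.app (eqTm σ) (vr k σ)) (quote σ b.1)) .base = true ↔ b'.1 = b.1 := by
        have hvt : typeOf (vr k σ) = some σ := typeOf_of_hasTy (hasTy_vr k σ)
        rw [eval_eqApp (σ := σ) _ hvt
          (typeOf_of_hasTy (hasTy_quote σ b.1)), eval_vr, Hσ.1,
          updates_lt l _ (k + 1) b'.2 k σ (by omega), update_same]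
        exact Hσ.2 _ b'.1 b.1
      erw [hhead, eqConj_spec l (fun ρ hρ => H ρ (by simp [hρ])) (k + 1) b.2 b'.2 _]
      constructor
      · rintro ⟨h1, h2⟩; exact Prod.ext h1 h2
      · rintro rfl; exact ⟨rfl, rfl⟩

lemma QOK_of {σ : Ty} (H : ∀ ρ ∈ σ.args, QOK ρ ∧ EOK ρ) : QOK σ := by
  intro I a
  apply applyTup_ext
  intro b'
  rw [quote_def]
  unfold quoteBodyAux
  rw [eval_mkLams]
  have htys : ∀ s ∈ ((((Finset.univ : Finset (Tup σ.args)).toList.filter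
        (fun b => σ.applyTup a b))).map
      (fun b => andList (eqConj σ.args (dataFor σ.args) 0 b))), HasTy s .base := by
    intro s hs
    obtain ⟨b, _, rfl⟩ := List.mem_map.1 hs
    exact hasTy_andList (fun u hu =>
      hasTy_eqConj σ.args (fun ρ _ => hasTyMain ρ) 0 b u hu)
  rw [eval_orList _ htys]
  have key : ∀ b, eval (updates I 0 σ.args b')
      (andList (eqConj σ.args (dataFor σ.args) 0 b)) .base = true ↔ b' = b := by
    intro b
    rw [eval_andList _ (fun u hu =>
      hasTy_eqConj σ.args (fun ρ _ => hasTyMain ρ) 0 b u hu)]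
    exact eqConj_spec σ.args H 0 b b' I
  apply bool_eq_of_iff
  erw [List.any_eq_true]
  constructor
  · rintro ⟨s, hs, hval⟩
    obtain ⟨b, hb, rfl⟩ := List.mem_map.1 hs
    obtain rfl := (key b).1 hval
    exact (List.mem_filter.1 hb).2
  · intro h
    exact ⟨_, List.mem_map.2 ⟨b', List.mem_filter.2 ⟨by simp, h⟩, rfl⟩, (key b').2 rfl⟩

lemma EOK_base : EOK .base := by
  intro I x y
  have h0 : eval I (eqTm .base) (.arrow .base (.arrow .base .base)) = fun x y =>
      eval ((I.update 0 .base x).update 1 .base y)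
        (equivTm (vr 0 .base) (vr 1 .base)) .base := by
    show eval I (.lam 0 .base (.lam 1 .base (equivTm (vr 0 .base) (vr 1 .base)))) _ = _
    rw [eval_lam]; funext x; rw [eval_lam]
  rw [h0]
  rw [eval_equivTm _ (typeOf_of_hasTy (hasTy_vr 0 .base)) (typeOf_of_hasTy (hasTy_vr 1 .base)),
    eval_vr, eval_vr, update_same, update_ne _ _ (fun hc => by omega), update_same]

lemma eval_allTmAux {σ : Ty} (hQ : QOK σ) (I : Interp) (G : (Ty.arrow σ .base).sem) :
    (eval I (allTmAux σ (quoteEq σ).1) (.arrow (.arrow σ .base) .base) G = true) ↔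
      ∀ a : σ.sem, G a = true := by
  have h0 : eval I (allTmAux σ (quoteEq σ).1) (.arrow (.arrow σ .base) .base) = fun G =>
      eval (I.update 0 (.arrow σ .base) G)
        (andList (((Finset.univ : Finset σ.sem).toList).map
          (fun a => .app (vr 0 (.arrow σ .base)) (quote σ a)))) .base := by
    rw [allTmAux, eval_lam]; rfl
  simp only [h0]
  have htys : ∀ s ∈ ((Finset.univ : Finset σ.sem).toList).map
      (fun a => (Tm.app (vr 0 (.arrow σ .base)) (quote σ a))), HasTy s .base := by
    intro s hs
    obtain ⟨b, _, rfl⟩ := List.mem_map.1 hs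
    exact .app (hasTy_vr 0 (.arrow σ .base)) (hasTy_quote σ b)
  erw [eval_andList _ htys, List.all_eq_true]
  have elem : ∀ a : σ.sem, eval (I.update 0 (.arrow σ .base) G)
      (.app (vr 0 (.arrow σ .base)) (quote σ a)) .base = G a := by
    intro a
    have ht := typeOf_of_hasTy (hasTy_quote σ a)
    rw [show eval (I.update 0 (.arrow σ .base) G)
        (.app (vr 0 (.arrow σ .base)) (quote σ a)) .base
        = eval (I.update 0 (.arrow σ .base) G) (vr 0 (.arrow σ .base)) (.arrow σ .base)
            (eval (I.update 0 (.arrow σ .base) G) (quote σ a) σ) from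
      eval_app_some _ _ ht]
    rw [eval_vr, hQ, update_same]
  constructor
  · intro h a
    have := h _ (List.mem_map.2 ⟨a, by simp, rfl⟩)
    rwa [elem a] at this
  · intro h s hs
    obtain ⟨a, _, rfl⟩ := List.mem_map.1 hs
    rw [elem a]
    exact h a

lemma EOK_arrow {σ τ : Ty} (hQσ : QOK σ) (hEτ : EOK τ) : EOK (.arrow σ τ) := by
  intro I f g
  have h0 : eval I (eqTm (.arrow σ τ))
      (.arrow (.arrow σ τ) (.arrow (.arrow σ τ) .base)) = fun f g =>
      eval ((I.update 0 (.arrow σ τ) f).update 1 (.arrow σ τ) g)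
        (.app (allTmAux σ (quoteEq σ).1)
          (.lam 2 σ (.app (.app (eqTm τ) (.app (vr 0 (.arrow σ τ)) (vr 2 σ)))
            (.app (vr 1 (.arrow σ τ)) (vr 2 σ))))) .base := by
    show eval I (.lam 0 (.arrow σ τ) (.lam 1 (.arrow σ τ)
           (.app (allTmAux σ (quoteEq σ).1)
             (.lam 2 σ
               (.app (.app (quoteEq τ).2
                  (.app (vr 0 (.arrow σ τ)) (vr 2 σ)))
                (.app (vr 1 (.arrow σ τ)) (vr 2 σ))))))) _ = _
    rw [eval_lam]; funext x; rw [eval_lam]; rfl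
  simp only [h0]
  set I2 := (I.update 0 (.arrow σ τ) f).update 1 (.arrow σ τ) g with hI2
  set LAM : Tm := .lam 2 σ (.app (.app (eqTm τ) (.app (vr 0 (.arrow σ τ)) (vr 2 σ)))
      (.app (vr 1 (.arrow σ τ)) (vr 2 σ))) with hLAM
  have hlam : HasTy LAM (.arrow σ .base) :=
    .lam (.app (.app (hasTy_eqTm τ) (.app (hasTy_vr 0 _) (hasTy_vr 2 σ)))
      (.app (hasTy_vr 1 _) (hasTy_vr 2 σ)))
  have happ : eval I2 (.app (allTmAux σ (quoteEq σ).1) LAM) .base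
      = eval I2 (allTmAux σ (quoteEq σ).1) (.arrow (.arrow σ .base) .base)
          (eval I2 LAM (.arrow σ .base)) := by
    rw [eval_app_some _ _ (typeOf_of_hasTy hlam)]
  rw [happ, eval_allTmAux hQσ]
  have hG : ∀ x : σ.sem, eval I2 LAM (.arrow σ .base) x
      = eval (I2.update 2 σ x) (eqTm τ) (.arrow τ (.arrow τ .base)) (f x) (g x) := by
    intro x
    have h1 : eval I2 LAM (.arrow σ .base) = fun x => eval (I2.update 2 σ x)
        (.app (.app (eqTm τ) (.app (vr 0 (.arrow σ τ)) (vr 2 σ)))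
          (.app (vr 1 (.arrow σ τ)) (vr 2 σ))) .base := by
      rw [hLAM, eval_lam]
    simp only [h1]
    have ht0 : typeOf (Tm.app (vr 0 (.arrow σ τ)) (vr 2 σ)) = some τ :=
      typeOf_of_hasTy (.app (hasTy_vr 0 _) (hasTy_vr 2 σ))
    have ht1 : typeOf (Tm.app (vr 1 (.arrow σ τ)) (vr 2 σ)) = some τ :=
      typeOf_of_hasTy (.app (hasTy_vr 1 _) (hasTy_vr 2 σ))
    rw [eval_eqApp (σ := τ) _ ht0 ht1]
    have hv2 : typeOf (vr 2 σ) = some σ := typeOf_of_hasTy (hasTy_vr 2 σ)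
    have e0 : eval (I2.update 2 σ x) (Tm.app (vr 0 (.arrow σ τ)) (vr 2 σ)) τ
        = f x := by
      rw [show eval (I2.update 2 σ x) (Tm.app (vr 0 (.arrow σ τ)) (vr 2 σ)) τ
          = eval (I2.update 2 σ x) (vr 0 (.arrow σ τ)) (.arrow σ τ)
              (eval (I2.update 2 σ x) (vr 2 σ) σ) from eval_app_some _ _ hv2]
      rw [eval_vr, eval_vr, update_same, hI2,
        update_ne _ _ (fun hc => by omega),
        update_ne _ _ (fun hc => by omega), update_same]
    have e1 : eval (I2.update 2 σ x) (Tm.app (vr 1 (.arrow σ τ)) (vr 2 σ)) τ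
        = g x := by
      rw [show eval (I2.update 2 σ x) (Tm.app (vr 1 (.arrow σ τ)) (vr 2 σ)) τ
          = eval (I2.update 2 σ x) (vr 1 (.arrow σ τ)) (.arrow σ τ)
              (eval (I2.update 2 σ x) (vr 2 σ) σ) from eval_app_some _ _ hv2]
      rw [eval_vr, eval_vr, update_same, hI2,
        update_ne _ _ (fun hc => by omega), update_same]
    rw [e0, e1]
  constructor
  · intro h
    funext x
    have := h x
    rw [hG x, hEτ _ (f x) (g x)] at this
    exact this
  · rintro rfl
    intro x
    rw [hG x]
    exact (hEτ _ (f x) (f x)).2 rfl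

lemma mainOK : ∀ σ : Ty, QOK σ ∧ EOK σ := by
  suffices h : ∀ (n : ℕ) (σ : Ty), σ.depth ≤ n → QOK σ ∧ EOK σ from
    fun σ => h σ.depth σ le_rfl
  intro n
  induction n with
  | zero =>
      intro σ h
      cases σ with
      | base => exact ⟨QOK_of (by simp [Ty.args]), EOK_base⟩
      | arrow σ τ => simp [Ty.depth] at h
  | succ n ih =>
      intro σ h
      cases σ with
      | base => exact ⟨QOK_of (by simp [Ty.args]), EOK_base⟩
      | arrow σ τ =>
          have hargs : ∀ ρ ∈ (Ty.arrow σ τ).args, QOK ρ ∧ EOK ρ := by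
            intro ρ hρ
            exact ih ρ (by have := depth_args hρ; omega)
          refine ⟨QOK_of hargs, EOK_arrow ?_ ?_⟩
          · exact (ih σ (by simp [Ty.depth] at h; omega)).1
          · exact (ih τ (by simp [Ty.depth] at h; omega)).2

/-- `B̂(↓σ a) = a` (for every interpretation, since `↓σ a` is closed). -/
theorem quote_denotes (σ : Ty) (a : σ.sem) (I : Interp) :
    eval I (quote σ a) σ = a := (mainOK σ).1 I a

end PTT
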